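/- Let U_{F,f} = {u ∈ U_F : dim ad(U_F)(u) < ∞} be the locally finite part of the quantized enveloping algebra. Then Δ(U_{F,f}) ⊆ U_F ⊗ U_{F,f}, i.e. the locally finite part is a left coideal subalgebra. -/

import Mathlib

open TensorProduct

noncomputable section

/-- The quantum integer `[n]_t = t^{n-1} + t^{n-3} + ⋯ + t^{-(n-1)}`. -/
def qInt {F : Type*} [Field F] (t : F) (n : ℕ) : F :=
  ∑ j ∈ Finset.range n, t ^ ((n : ℤ) - 1 - 2 * j)

/-- The quantum factorial `[n]_t!`. -/
def qFac {F : Type*} [Field F] (t : F) (n : ℕ) : F :=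
  ∏ m ∈ Finset.range n, qInt t (m + 1)

/-- The adjoint action `ad(u)(v) = Σ u₍₀₎ v S(u₍₁₎)` in a Hopf algebra. -/
def ad (F : Type*) {U : Type*} [CommRing F] [Ring U] [HopfAlgebra F U]
    (u v : U) : U :=
  LinearMap.mul' F U
    (TensorProduct.map (LinearMap.mulRight F v) (HopfAlgebra.antipode (R := F))
      (Coalgebra.comul u))

/-- Data of a Drinfeld–Jimbo quantized enveloping algebra: a Hopf algebra `U` over `F`
with Chevalley generators `e i`, `f i`, group-likes `k λ`, simple roots `α i` inside the
weight lattice `Λ`, the values `qp λ μ = q^{(λ,μ)}`, `qi i = q_i`, and coroot pairings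
`cp λ i = (λ, α_i^∨)`. -/
structure QGroupData (F : Type*) [Field F] (I Λ U : Type*) [DecidableEq I] [AddCommGroup Λ]
    [Ring U] [HopfAlgebra F U] where
  e : I → U
  f : I → U
  k : Λ → U
  α : I → Λ
  qi : I → F
  qp : Λ → Λ → F
  cp : Λ → I → ℤ
  qp_ne : ∀ l m, qp l m ≠ 0
  qi_ne : ∀ i, qi i ≠ 0
  qp_add_left : ∀ l l' m, qp (l + l') m = qp l m * qp l' m
  qp_symm : ∀ l m, qp l m = qp m l
  qp_cp : ∀ l i, qp l (α i) = qi i ^ cp l i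
  k_zero : k 0 = 1
  k_add : ∀ l m, k (l + m) = k l * k m
  k_e : ∀ l i, k l * e i = qp l (α i) • (e i * k l)
  k_f : ∀ l i, k l * f i = (qp l (α i))⁻¹ • (f i * k l)
  ef : ∀ i j, e i * f j - f j * e i =
    if i = j then (qi i - (qi i)⁻¹)⁻¹ • (k (α i) - k (-α i)) else 0
  comul_k : ∀ l, Coalgebra.comul (R := F) (k l) = k l ⊗ₜ[F] k l
  comul_e : ∀ i, Coalgebra.comul (R := F) (e i) = e i ⊗ₜ[F] 1 + k (α i) ⊗ₜ[F] e i
  comul_f : ∀ i, Coalgebra.comul (R := F) (f i) = f i ⊗ₜ[F] k (-α i) + 1 ⊗ₜ[F] f i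
  counit_k : ∀ l, Coalgebra.counit (R := F) (k l) = 1
  counit_e : ∀ i, Coalgebra.counit (R := F) (e i) = 0
  counit_f : ∀ i, Coalgebra.counit (R := F) (f i) = 0
  antipode_k : ∀ l, HopfAlgebra.antipode (R := F) (k l) = k (-l)
  antipode_e : ∀ i, HopfAlgebra.antipode (R := F) (e i) = -(k (-α i) * e i)
  antipode_f : ∀ i, HopfAlgebra.antipode (R := F) (f i) = -(f i * k (α i))


namespace StmtAux

open Coalgebra HopfAlgebra

variable {F : Type*} [Field F] {U : Type*} [Ring U] [HopfAlgebra F U]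

lemma sum_counit_smul_right {x : U} (ρ : Coalgebra.Repr F x (U × U)) :
    ∑ i ∈ ρ.index, Coalgebra.counit (R := F) (ρ.left i) • ρ.right i = x := by
  have h := congrArg (TensorProduct.lid F U) (Coalgebra.sum_counit_tmul_eq ρ)
  simp only [map_sum, TensorProduct.lid_tmul] at h
  simpa using h

lemma sum_counit_smul_left {x : U} (ρ : Coalgebra.Repr F x (U × U)) :
    ∑ i ∈ ρ.index, Coalgebra.counit (R := F) (ρ.right i) • ρ.left i = x := by
  have h := congrArg (TensorProduct.rid F U) (Coalgebra.sum_tmul_counit_eq ρ)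
  simp only [map_sum, TensorProduct.rid_tmul] at h
  simpa using h

lemma ad_repr {x : U} (v : U) (ρ : Coalgebra.Repr F x (U × U)) :
    ad F x v = ∑ i ∈ ρ.index, ρ.left i * v * antipode (R := F) (ρ.right i) := by
  rw [ad, ← ρ.eq]
  simp [map_sum, mul_assoc]

lemma quad_rebracket {W : Type*} [AddCommGroup W] [Module F W]
    (φ : U ⊗[F] (U ⊗[F] (U ⊗[F] U)) →ₗ[F] W) (a : U) (r : Coalgebra.Repr F a (U × U))
    (r1 : ∀ i : U × U, Coalgebra.Repr F (r.left i) (U × U))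
    (s : ∀ i : U × U, Coalgebra.Repr F (r.right i) (U × U))
    (t : ∀ (i : U × U) (k : U × U), Coalgebra.Repr F ((s i).left k) (U × U)) :
    ∑ i ∈ r.index, ∑ j ∈ (r1 i).index, ∑ k ∈ (s i).index,
      φ ((r1 i).left j ⊗ₜ[F] ((r1 i).right j ⊗ₜ[F] ((s i).left k ⊗ₜ[F] (s i).right k)))
    = ∑ i ∈ r.index, ∑ k ∈ (s i).index, ∑ m ∈ (t i k).index,
      φ (r.left i ⊗ₜ[F] ((t i k).left m ⊗ₜ[F] ((t i k).right m ⊗ₜ[F] (s i).right k))) := by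
  classical
  set u : ∀ (i : U × U) (k : U × U), Coalgebra.Repr F ((s i).right k) (U × U) :=
    fun i k => Coalgebra.Repr.arbitrary F ((s i).right k) with hu
  set Ξ : U ⊗[F] (U ⊗[F] U) →ₗ[F] W :=
    φ ∘ₗ (LinearMap.lTensor U (LinearMap.lTensor U (Coalgebra.comul (R := F)))) with hΞ
  have hΞ_app : ∀ (p q w : U), Ξ (p ⊗ₜ[F] (q ⊗ₜ[F] w)) =
      φ (p ⊗ₜ[F] (q ⊗ₜ[F] Coalgebra.comul (R := F) w)) := by
    intro p q w; simp [hΞ]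
  have key := congrArg Ξ (Coalgebra.sum_tmul_tmul_eq r r1 s)
  rw [map_sum, map_sum] at key
  simp only [map_sum] at key
  -- LHS of key
  have hL : ∑ i ∈ r.index, ∑ j ∈ (r1 i).index,
      Ξ ((r1 i).left j ⊗ₜ[F] ((r1 i).right j ⊗ₜ[F] r.right i)) =
      ∑ i ∈ r.index, ∑ j ∈ (r1 i).index, ∑ k ∈ (s i).index,
        φ ((r1 i).left j ⊗ₜ[F] ((r1 i).right j ⊗ₜ[F] ((s i).left k ⊗ₜ[F] (s i).right k))) := by
    refine Finset.sum_congr rfl fun i _ => Finset.sum_congr rfl fun j _ => ?_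
    rw [hΞ_app, ← (s i).eq]
    simp [tmul_sum]
  -- RHS of key
  have hR : ∑ i ∈ r.index, ∑ k ∈ (s i).index,
      Ξ (r.left i ⊗ₜ[F] ((s i).left k ⊗ₜ[F] (s i).right k)) =
      ∑ i ∈ r.index, ∑ k ∈ (s i).index, ∑ n ∈ (u i k).index,
        φ (r.left i ⊗ₜ[F] ((s i).left k ⊗ₜ[F] ((u i k).left n ⊗ₜ[F] (u i k).right n))) := by
    refine Finset.sum_congr rfl fun i _ => Finset.sum_congr rfl fun k _ => ?_
    rw [hΞ_app, ← (u i k).eq]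
    simp [tmul_sum]
  have step1 : ∑ i ∈ r.index, ∑ j ∈ (r1 i).index, ∑ k ∈ (s i).index,
      φ ((r1 i).left j ⊗ₜ[F] ((r1 i).right j ⊗ₜ[F] ((s i).left k ⊗ₜ[F] (s i).right k)))
      = ∑ i ∈ r.index, ∑ k ∈ (s i).index, ∑ n ∈ (u i k).index,
        φ (r.left i ⊗ₜ[F] ((s i).left k ⊗ₜ[F] ((u i k).left n ⊗ₜ[F] (u i k).right n))) := by
    rw [← hL, ← hR]; exact key
  rw [step1]
  -- second step: per i, coassoc on r.right i
  refine Finset.sum_congr rfl fun i _ => ?_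
  have key2 := Coalgebra.sum_tmul_tmul_eq (s i) (t i) (u i)
  have := congrArg (φ ∘ₗ (TensorProduct.mk F U (U ⊗[F] (U ⊗[F] U)) (r.left i))) key2
  simp only [map_sum, LinearMap.coe_comp, Function.comp_apply, TensorProduct.mk_apply] at this
  exact this.symm

def phi1 : U ⊗[F] (U ⊗[F] (U ⊗[F] U)) →ₗ[F] U ⊗[F] U :=
  (TensorProduct.map (LinearMap.mul' F U ∘ₗ TensorProduct.map (antipode (R := F)) LinearMap.id)
     (LinearMap.mul' F U ∘ₗ TensorProduct.map (antipode (R := F)) LinearMap.id)) ∘ₗ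
  (TensorProduct.tensorTensorTensorComm F U U U U).toLinearMap ∘ₗ
  (TensorProduct.map (TensorProduct.comm F U U).toLinearMap LinearMap.id) ∘ₗ
  (TensorProduct.assoc F U U (U ⊗[F] U)).symm.toLinearMap

@[simp] lemma phi1_tmul (x y z w : U) :
    phi1 (x ⊗ₜ[F] (y ⊗ₜ[F] (z ⊗ₜ[F] w))) =
      (antipode (R := F) y * z) ⊗ₜ[F] (antipode (R := F) x * w) := by
  simp [phi1]

/-- `τ ∘ (S ⊗ S) ∘ Δ` is a left convolution inverse of `Δ`. -/
lemma conv_G_comul {x : U} (ρ : Coalgebra.Repr F x (U × U)) :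
    ∑ i ∈ ρ.index,
      (TensorProduct.comm F U U (TensorProduct.map (antipode (R := F)) (antipode (R := F))
          (Coalgebra.comul (ρ.left i)))) * (Coalgebra.comul (R := F) (ρ.right i))
      = Coalgebra.counit (R := F) x • (1 : U ⊗[F] U) := by
  classical
  set r1 : ∀ i : U × U, Coalgebra.Repr F (ρ.left i) (U × U) := fun i => Coalgebra.Repr.arbitrary F _
  set s : ∀ i : U × U, Coalgebra.Repr F (ρ.right i) (U × U) := fun i => Coalgebra.Repr.arbitrary F _
  set t : ∀ (i : U × U) (k : U × U), Coalgebra.Repr F ((s i).left k) (U × U) :=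
    fun i k => Coalgebra.Repr.arbitrary F _
  have expand : ∑ i ∈ ρ.index,
      (TensorProduct.comm F U U (TensorProduct.map (antipode (R := F)) (antipode (R := F))
          (Coalgebra.comul (ρ.left i)))) * (Coalgebra.comul (R := F) (ρ.right i))
      = ∑ i ∈ ρ.index, ∑ j ∈ (r1 i).index, ∑ k ∈ (s i).index,
          phi1 ((r1 i).left j ⊗ₜ[F] ((r1 i).right j ⊗ₜ[F] ((s i).left k ⊗ₜ[F] (s i).right k))) := by
    refine Finset.sum_congr rfl fun i _ => ?_
    rw [← (r1 i).eq, ← (s i).eq]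
    simp only [map_sum, TensorProduct.map_tmul, TensorProduct.comm_tmul, phi1_tmul]
    rw [Finset.sum_mul]
    refine Finset.sum_congr rfl fun j _ => ?_
    rw [Finset.mul_sum]
    refine Finset.sum_congr rfl fun k _ => ?_
    simp [Algebra.TensorProduct.tmul_mul_tmul]
  rw [expand, quad_rebracket phi1 x ρ r1 s t]
  have inner : ∀ i ∈ ρ.index, ∑ k ∈ (s i).index, ∑ m ∈ (t i k).index,
      phi1 (ρ.left i ⊗ₜ[F] ((t i k).left m ⊗ₜ[F] ((t i k).right m ⊗ₜ[F] (s i).right k)))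
      = (1 : U) ⊗ₜ[F] (antipode (R := F) (ρ.left i) * ρ.right i) := by
    intro i _
    have hk : ∀ k ∈ (s i).index, ∑ m ∈ (t i k).index,
        phi1 (ρ.left i ⊗ₜ[F] ((t i k).left m ⊗ₜ[F] ((t i k).right m ⊗ₜ[F] (s i).right k)))
        = Coalgebra.counit (R := F) ((s i).left k) •
            ((1 : U) ⊗ₜ[F] (antipode (R := F) (ρ.left i) * (s i).right k)) := by
      intro k _
      simp only [phi1_tmul]
      rw [← TensorProduct.sum_tmul, HopfAlgebra.sum_antipode_mul_eq_algebraMap_counit (t i k),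
        Algebra.algebraMap_eq_smul_one, TensorProduct.smul_tmul']
    rw [Finset.sum_congr rfl hk]
    have : ∑ k ∈ (s i).index, Coalgebra.counit (R := F) ((s i).left k) •
        ((1 : U) ⊗ₜ[F] (antipode (R := F) (ρ.left i) * (s i).right k))
        = (1 : U) ⊗ₜ[F] (antipode (R := F) (ρ.left i) *
            ∑ k ∈ (s i).index, Coalgebra.counit (R := F) ((s i).left k) • (s i).right k) := by
      rw [Finset.mul_sum, tmul_sum]
      refine Finset.sum_congr rfl fun k _ => ?_
      rw [mul_smul_comm, TensorProduct.tmul_smul]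
    rw [this, sum_counit_smul_right (s i)]
  rw [Finset.sum_congr rfl inner, ← tmul_sum, HopfAlgebra.sum_antipode_mul_eq_algebraMap_counit ρ,
    Algebra.algebraMap_eq_smul_one, TensorProduct.tmul_smul]
  rw [Algebra.TensorProduct.one_def]

/-- `Δ ∘ S` is a right convolution inverse of `Δ`. -/
lemma conv_comul_L {x : U} (ρ : Coalgebra.Repr F x (U × U)) :
    ∑ i ∈ ρ.index, Coalgebra.comul (R := F) (ρ.left i) *
        Coalgebra.comul (R := F) (antipode (R := F) (ρ.right i))
      = Coalgebra.counit (R := F) x • (1 : U ⊗[F] U) := by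
  have : ∀ i ∈ ρ.index, Coalgebra.comul (R := F) (ρ.left i) *
        Coalgebra.comul (R := F) (antipode (R := F) (ρ.right i))
      = Coalgebra.comul (R := F) (ρ.left i * antipode (R := F) (ρ.right i)) := fun i _ => by
    rw [Bialgebra.comul_mul]
  rw [Finset.sum_congr rfl this, ← map_sum, HopfAlgebra.sum_mul_antipode_eq_algebraMap_counit ρ,
    Bialgebra.comul_algebraMap, Algebra.algebraMap_eq_smul_one]

theorem comul_antipode (a : U) :
    Coalgebra.comul (R := F) (antipode (R := F) a) =
      TensorProduct.comm F U U (TensorProduct.map (antipode (R := F)) (antipode (R := F))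
        (Coalgebra.comul a)) := by
  classical
  set Gmap : U →ₗ[F] U ⊗[F] U :=
    (TensorProduct.comm F U U).toLinearMap ∘ₗ
      TensorProduct.map (antipode (R := F)) (antipode (R := F)) ∘ₗ Coalgebra.comul with hG
  set Lmap : U →ₗ[F] U ⊗[F] U := Coalgebra.comul ∘ₗ antipode (R := F) with hLm
  have hGa : ∀ b : U, Gmap b = TensorProduct.comm F U U
      (TensorProduct.map (antipode (R := F)) (antipode (R := F)) (Coalgebra.comul b)) :=
    fun b => rfl
  have hLa : ∀ b : U, Lmap b = Coalgebra.comul (R := F) (antipode (R := F) b) := fun b => rfl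
  set r : Coalgebra.Repr F a (U × U) := Coalgebra.Repr.arbitrary F a
  set r1 : ∀ i : U × U, Coalgebra.Repr F (r.left i) (U × U) := fun i => Coalgebra.Repr.arbitrary F _
  set s : ∀ i : U × U, Coalgebra.Repr F (r.right i) (U × U) := fun i => Coalgebra.Repr.arbitrary F _
  set T : U ⊗[F] (U ⊗[F] U) →ₗ[F] U ⊗[F] U :=
    LinearMap.mul' F (U ⊗[F] U) ∘ₗ
      TensorProduct.map Gmap (LinearMap.mul' F (U ⊗[F] U) ∘ₗ
        TensorProduct.map (Coalgebra.comul (R := F)) Lmap) with hT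
  have hT_app : ∀ p q w : U, T (p ⊗ₜ[F] (q ⊗ₜ[F] w)) =
      Gmap p * (Coalgebra.comul (R := F) q * Lmap w) := by
    intro p q w; simp [hT]
  -- Evaluate P two ways
  have eval1 : ∑ i ∈ r.index, ∑ k ∈ (s i).index,
      T (r.left i ⊗ₜ[F] ((s i).left k ⊗ₜ[F] (s i).right k)) = Gmap a := by
    have : ∀ i ∈ r.index, ∑ k ∈ (s i).index,
        T (r.left i ⊗ₜ[F] ((s i).left k ⊗ₜ[F] (s i).right k))
        = Coalgebra.counit (R := F) (r.right i) • Gmap (r.left i) := by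
      intro i _
      simp only [hT_app, hLa]
      rw [← Finset.mul_sum, conv_comul_L (s i), mul_smul_comm, mul_one]
    rw [Finset.sum_congr rfl this]
    have h2 : ∑ x ∈ r.index, Coalgebra.counit (R := F) (r.right x) • Gmap (r.left x)
        = Gmap (∑ x ∈ r.index, Coalgebra.counit (R := F) (r.right x) • r.left x) := by
      rw [map_sum]; exact Finset.sum_congr rfl fun i _ => (map_smul Gmap _ _).symm
    rw [h2, sum_counit_smul_left r]
  have eval2 : ∑ i ∈ r.index, ∑ k ∈ (s i).index,
      T (r.left i ⊗ₜ[F] ((s i).left k ⊗ₜ[F] (s i).right k)) = Lmap a := by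
    have key := congrArg T (Coalgebra.sum_tmul_tmul_eq r r1 s)
    simp only [map_sum] at key
    rw [← key]
    have : ∀ i ∈ r.index, ∑ j ∈ (r1 i).index,
        T ((r1 i).left j ⊗ₜ[F] ((r1 i).right j ⊗ₜ[F] r.right i))
        = Coalgebra.counit (R := F) (r.left i) • Lmap (r.right i) := by
      intro i _
      simp only [hT_app]
      have : ∑ j ∈ (r1 i).index, Gmap ((r1 i).left j) *
          (Coalgebra.comul (R := F) ((r1 i).right j) * Lmap (r.right i))
          = (∑ j ∈ (r1 i).index, Gmap ((r1 i).left j) *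
              Coalgebra.comul (R := F) ((r1 i).right j)) * Lmap (r.right i) := by
        rw [Finset.sum_mul]
        exact Finset.sum_congr rfl fun j _ => (mul_assoc _ _ _).symm
      rw [this]
      have hc := conv_G_comul (r1 i)
      simp only [hGa] at *
      rw [hc, smul_mul_assoc, one_mul]
    rw [Finset.sum_congr rfl this]
    have h2 : ∑ x ∈ r.index, Coalgebra.counit (R := F) (r.left x) • Lmap (r.right x)
        = Lmap (∑ x ∈ r.index, Coalgebra.counit (R := F) (r.left x) • r.right x) := by
      rw [map_sum]; exact Finset.sum_congr rfl fun i _ => (map_smul Lmap _ _).symm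
    rw [h2, sum_counit_smul_right r]
  rw [← hLa, ← hGa, ← eval1, eval2]

lemma comul_antipode_repr {b : U} (ρ : Coalgebra.Repr F b (U × U)) :
    Coalgebra.comul (R := F) (antipode (R := F) b) =
      ∑ i ∈ ρ.index, antipode (R := F) (ρ.right i) ⊗ₜ[F] antipode (R := F) (ρ.left i) := by
  rw [comul_antipode, ← ρ.eq]
  simp [map_sum]

def phi2 (k : U) : U ⊗[F] (U ⊗[F] (U ⊗[F] U)) →ₗ[F] U ⊗[F] U :=
  (TensorProduct.map
      (LinearMap.mul' F U ∘ₗ TensorProduct.map (LinearMap.mulRight F k) (antipode (R := F)))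
      (LinearMap.mul' F U ∘ₗ TensorProduct.map (LinearMap.mulRight F k) (antipode (R := F)))) ∘ₗ
  (TensorProduct.tensorTensorTensorComm F U U U U).toLinearMap ∘ₗ
  (TensorProduct.map LinearMap.id (TensorProduct.comm F U U).toLinearMap) ∘ₗ
  (TensorProduct.assoc F U U (U ⊗[F] U)).symm.toLinearMap

@[simp] lemma phi2_tmul (k x y z w : U) :
    phi2 k (x ⊗ₜ[F] (y ⊗ₜ[F] (z ⊗ₜ[F] w))) =
      (x * k * antipode (R := F) w) ⊗ₜ[F] (y * k * antipode (R := F) z) := by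
  simp [phi2]

lemma comul_ad_mem (k x : U) (hk : Coalgebra.comul (R := F) k = k ⊗ₜ[F] k)
    (M : Submodule F (U ⊗[F] U)) (hM : ∀ a y : U, a ⊗ₜ[F] (ad F y k) ∈ M) :
    Coalgebra.comul (R := F) (ad F x k) ∈ M := by
  classical
  set r : Coalgebra.Repr F x (U × U) := Coalgebra.Repr.arbitrary F x
  set r1 : ∀ i : U × U, Coalgebra.Repr F (r.left i) (U × U) := fun i => Coalgebra.Repr.arbitrary F _
  set s : ∀ i : U × U, Coalgebra.Repr F (r.right i) (U × U) := fun i => Coalgebra.Repr.arbitrary F _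
  set t : ∀ (i : U × U) (j : U × U), Coalgebra.Repr F ((s i).left j) (U × U) :=
    fun i j => Coalgebra.Repr.arbitrary F _
  have expand : Coalgebra.comul (R := F) (ad F x k)
      = ∑ i ∈ r.index, ∑ j ∈ (r1 i).index, ∑ m ∈ (s i).index,
          phi2 k ((r1 i).left j ⊗ₜ[F] ((r1 i).right j ⊗ₜ[F]
            ((s i).left m ⊗ₜ[F] (s i).right m))) := by
    rw [ad_repr k r, map_sum]
    refine Finset.sum_congr rfl fun i _ => ?_
    rw [Bialgebra.comul_mul, Bialgebra.comul_mul, hk, comul_antipode_repr (s i), ← (r1 i).eq]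
    rw [Finset.sum_mul, Finset.sum_mul]
    refine Finset.sum_congr rfl fun j _ => ?_
    rw [Finset.mul_sum]
    refine Finset.sum_congr rfl fun m _ => ?_
    simp [Algebra.TensorProduct.tmul_mul_tmul]
  rw [expand, quad_rebracket (phi2 k) x r r1 s t]
  refine Submodule.sum_mem M fun i _ => Submodule.sum_mem M fun m _ => ?_
  have : ∑ n ∈ (t i m).index, phi2 k (r.left i ⊗ₜ[F] ((t i m).left n ⊗ₜ[F]
      ((t i m).right n ⊗ₜ[F] (s i).right m)))
      = (r.left i * k * antipode (R := F) ((s i).right m)) ⊗ₜ[F] ad F ((s i).left m) k := by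
    simp only [phi2_tmul]
    rw [← TensorProduct.tmul_sum, ad_repr k (t i m)]
  rw [this]
  exact hM _ _

end StmtAux

/-- Lemma 2.6 (first formula): the locally finite part
`U_{F,f} = {u ∈ U_F : dim ad(U_F)(u) < ∞}` of the quantized enveloping algebra is a left
coideal: `Δ(U_{F,f}) ⊆ U_F ⊗ U_{F,f}`.  The Joseph–Letzter description
`U_{F,f} = Σ_{λ∈Λ⁺} ad(U_F)(k_{−2λ})` is supplied as hypothesis `hJL`. -/
theorem stmt5 {F I Λ U : Type*} [Field F] [DecidableEq I] [AddCommGroup Λ]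
    [Ring U] [HopfAlgebra F U] (Q : QGroupData F I Λ U)
    (Uf : Set U)
    (hUf : Uf = {u : U | FiniteDimensional F
      (Submodule.span F (Set.range fun x : U => ad F x u))})
    (Dom : Set Λ) (hDom : Dom = {μ : Λ | ∀ i : I, 0 ≤ Q.cp μ i})
    (hJL : Uf = ↑(Submodule.span F
      {v : U | ∃ (x : U) (μ : Λ), μ ∈ Dom ∧ v = ad F x (Q.k (-(2 • μ)))})) :
    ∀ u ∈ Uf, Coalgebra.comul (R := F) u ∈
      Submodule.span F {z : U ⊗[F] U | ∃ (a b : U), b ∈ Uf ∧ z = a ⊗ₜ[F] b} := by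
  intro u hu
  rw [hJL] at hu
  refine Submodule.span_induction
    (p := fun u _ => Coalgebra.comul (R := F) u ∈
      Submodule.span F {z : U ⊗[F] U | ∃ (a b : U), b ∈ Uf ∧ z = a ⊗ₜ[F] b})
    ?_ ?_ ?_ ?_ hu
  · rintro v ⟨y, μ, hμ, rfl⟩
    refine StmtAux.comul_ad_mem _ _ (Q.comul_k _) _ ?_
    intro a y'
    refine Submodule.subset_span ⟨a, ad F y' (Q.k (-(2 • μ))), ?_, rfl⟩
    rw [hJL]
    exact Submodule.subset_span ⟨y', μ, hμ, rfl⟩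
  · simpa using Submodule.zero_mem _
  · intro a b _ _ ha hb
    rw [map_add]
    exact Submodule.add_mem _ ha hb
  · intro c a _ ha
    rw [map_smul]
    exact Submodule.smul_mem _ c ha


end
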